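/- The graph Γ₈ has exactly four graph automorphisms; its automorphism group is isomorphic to the Klein four-group ℤ/2 × ℤ/2, generated by the involution σ fixing v₁ and v₂ and swapping aᵢ with bᵢ for i = 1, 2, 3, and the involution τ given by a₁ ↔ a₂, b₁ ↔ b₂, a₃ ↔ b₃, v₁ ↔ v₂. -/
import Mathlib

/-- The vertices of the graph `Γ₈`. -/
inductive V8 : Type
  | v1 | v2 | a1 | a2 | a3 | b1 | b2 | b3
  deriving DecidableEq

open V8

/-- The graph `Γ₈`: the hexagonal cycle `a₁a₂a₃b₁b₂b₃a₁`, the chord `a₃b₃`,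
and the four edges `a₁v₁`, `v₁b₁`, `a₂v₂`, `v₂b₂`. -/
def Gamma8 : SimpleGraph V8 :=
  SimpleGraph.fromEdgeSet
    {s(a1, a2), s(a2, a3), s(a3, b1), s(b1, b2), s(b2, b3), s(b3, a1),
     s(a3, b3),
     s(a1, v1), s(v1, b1), s(a2, v2), s(v2, b2)}

/-- The involution `σ` of the vertex set of `Γ₈` fixing `v₁` and `v₂` and swapping `aᵢ`
with `bᵢ` for `i = 1, 2, 3`. -/
def sigma8 : V8 → V8
  | v1 => v1
  | v2 => v2
  | a1 => b1
  | a2 => b2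
  | a3 => b3
  | b1 => a1
  | b2 => a2
  | b3 => a3

/-- The involution `τ` of the vertex set of `Γ₈` given by `a₁ ↔ a₂`, `b₁ ↔ b₂`,
`a₃ ↔ b₃`, `v₁ ↔ v₂`. -/
def tau8 : V8 → V8
  | v1 => v2
  | v2 => v1
  | a1 => a2
  | a2 => a1
  | a3 => b3
  | b1 => b2
  | b2 => b1
  | b3 => a3

instance : Fintype V8 :=
  ⟨⟨[v1, v2, a1, a2, a3, b1, b2, b3], by decide⟩, fun x => by cases x <;> decide⟩

/-- Neighbor lists for `Γ₈`. -/
def nbrs8 : V8 → List V8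
  | v1 => [a1, b1] | v2 => [a2, b2]
  | a1 => [a2, b3, v1] | a2 => [a1, a3, v2] | a3 => [a2, b1, b3]
  | b1 => [a3, b2, v1] | b2 => [b1, b3, v2] | b3 => [b2, a1, a3]

/-- Boolean adjacency for `Γ₈`. -/
def adjB8 (x y : V8) : Bool := (nbrs8 x).contains y

lemma Gamma8_adj_iff' (x y : V8) : Gamma8.Adj x y ↔
    (s(x,y) = s(a1,a2) ∨ s(x,y) = s(a2,a3) ∨ s(x,y) = s(a3,b1) ∨ s(x,y) = s(b1,b2) ∨
     s(x,y) = s(b2,b3) ∨ s(x,y) = s(b3,a1) ∨ s(x,y) = s(a3,b3) ∨ s(x,y) = s(a1,v1) ∨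
     s(x,y) = s(v1,b1) ∨ s(x,y) = s(a2,v2) ∨ s(x,y) = s(v2,b2)) ∧ x ≠ y := by
  simp [Gamma8, SimpleGraph.fromEdgeSet_adj, Set.mem_insert_iff, Set.mem_singleton_iff]

lemma adjB8_iff (x y : V8) : adjB8 x y = true ↔ Gamma8.Adj x y := by
  rw [Gamma8_adj_iff']
  revert x y
  decide

instance Gamma8.decAdj : DecidableRel Gamma8.Adj := fun x y =>
  decidable_of_iff _ (adjB8_iff x y)

set_option synthInstance.maxSize 2000 in
set_option synthInstance.maxHeartbeats 1000000 in
set_option maxHeartbeats 4000000 in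
lemma classify_aux :
  ∀ p1 p2 : V8, adjB8 p1 p2 = true →
  ∀ p3 : V8, (adjB8 p2 p3 && (p3 != p1)) = true →
  ∀ q1 : V8, (adjB8 p3 q1 && (q1 != p1) && (q1 != p2)) = true →
  ∀ q2 : V8, (adjB8 q1 q2 && (q2 != p1) && (q2 != p2) && (q2 != p3)) = true →
  ∀ q3 : V8, (adjB8 q2 q3 && adjB8 q3 p1 && adjB8 p3 q3 && (q3 != p1) && (q3 != p2) && (q3 != p3) && (q3 != q1) && (q3 != q2)) = true →
  ∀ u1 : V8, (adjB8 p1 u1 && adjB8 u1 q1 && (u1 != p1) && (u1 != p2) && (u1 != p3) && (u1 != q1) && (u1 != q2) && (u1 != q3)) = true →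
  ∀ u2 : V8, (adjB8 p2 u2 && adjB8 u2 q2 && (u2 != p1) && (u2 != p2) && (u2 != p3) && (u2 != q1) && (u2 != q2) && (u2 != q3) && (u2 != u1)) = true →
  ((p1,p2,p3,q1,q2,q3,u1,u2) = (a1,a2,a3,b1,b2,b3,v1,v2) ∨
   (p1,p2,p3,q1,q2,q3,u1,u2) = (b1,b2,b3,a1,a2,a3,v1,v2) ∨
   (p1,p2,p3,q1,q2,q3,u1,u2) = (a2,a1,b3,b2,b1,a3,v2,v1) ∨
   (p1,p2,p3,q1,q2,q3,u1,u2) = (b2,b1,a3,a2,a1,b3,v2,v1)) := by decide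

lemma classify8 (φ : Gamma8 ≃g Gamma8) :
    ⇑φ = id ∨ ⇑φ = sigma8 ∨ ⇑φ = tau8 ∨ ⇑φ = sigma8 ∘ tau8 := by
  have hadj : ∀ x y : V8, Gamma8.Adj x y → adjB8 (φ x) (φ y) = true := fun x y h =>
    (adjB8_iff _ _).mpr (φ.map_adj_iff.mpr h)
  have hne : ∀ x y : V8, x ≠ y → (φ x != φ y) = true := fun x y h =>
    bne_iff_ne.mpr fun he => h (φ.injective he)
  have key := classify_aux (φ a1) (φ a2)
    (hadj _ _ (by decide)) (φ a3)
    (by simp only [Bool.and_eq_true]; exact ⟨hadj _ _ (by decide), hne _ _ (by decide)⟩)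
    (φ b1)
    (by simp only [Bool.and_eq_true]
        exact ⟨⟨hadj _ _ (by decide), hne _ _ (by decide)⟩, hne _ _ (by decide)⟩)
    (φ b2)
    (by simp only [Bool.and_eq_true]
        exact ⟨⟨⟨hadj _ _ (by decide), hne _ _ (by decide)⟩, hne _ _ (by decide)⟩,
          hne _ _ (by decide)⟩)
    (φ b3)
    (by simp only [Bool.and_eq_true]
        exact ⟨⟨⟨⟨⟨⟨⟨hadj _ _ (by decide), hadj _ _ (by decide)⟩, hadj _ _ (by decide)⟩,
          hne _ _ (by decide)⟩, hne _ _ (by decide)⟩, hne _ _ (by decide)⟩,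
          hne _ _ (by decide)⟩, hne _ _ (by decide)⟩)
    (φ v1)
    (by simp only [Bool.and_eq_true]
        exact ⟨⟨⟨⟨⟨⟨⟨hadj _ _ (by decide), hadj _ _ (by decide)⟩, hne _ _ (by decide)⟩,
          hne _ _ (by decide)⟩, hne _ _ (by decide)⟩, hne _ _ (by decide)⟩,
          hne _ _ (by decide)⟩, hne _ _ (by decide)⟩)
    (φ v2)
    (by simp only [Bool.and_eq_true]
        exact ⟨⟨⟨⟨⟨⟨⟨⟨hadj _ _ (by decide), hadj _ _ (by decide)⟩, hne _ _ (by decide)⟩,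
          hne _ _ (by decide)⟩, hne _ _ (by decide)⟩, hne _ _ (by decide)⟩,
          hne _ _ (by decide)⟩, hne _ _ (by decide)⟩, hne _ _ (by decide)⟩)
  rcases key with h | h | h | h <;>
    simp only [Prod.mk.injEq] at h <;>
    obtain ⟨e1, e2, e3, e4, e5, e6, e7, e8⟩ := h
  · left
    funext x; cases x <;> simp only [id_eq] <;> assumption
  · right; left
    funext x; cases x <;> simp only [sigma8] <;> assumption
  · right; right; left
    funext x; cases x <;> simp only [tau8] <;> assumption
  · right; right; right
    funext x; cases x <;> simp only [Function.comp, tau8, sigma8] <;> assumption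

/-- `σ` as a graph automorphism. -/
def sigmaIso8 : Gamma8 ≃g Gamma8 where
  toFun := sigma8
  invFun := sigma8
  left_inv := fun x => by cases x <;> rfl
  right_inv := fun x => by cases x <;> rfl
  map_rel_iff' := by
    intro x y
    show Gamma8.Adj (sigma8 x) (sigma8 y) ↔ Gamma8.Adj x y
    rw [← adjB8_iff, ← adjB8_iff]
    revert x y; decide

/-- `τ` as a graph automorphism. -/
def tauIso8 : Gamma8 ≃g Gamma8 where
  toFun := tau8
  invFun := tau8
  left_inv := fun x => by cases x <;> rfl
  right_inv := fun x => by cases x <;> rfl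
  map_rel_iff' := by
    intro x y
    show Gamma8.Adj (tau8 x) (tau8 y) ↔ Gamma8.Adj x y
    rw [← adjB8_iff, ← adjB8_iff]
    revert x y; decide

/-- The invariant map to the Klein four-group. -/
def F8 (φ : Gamma8 ≃g Gamma8) : Multiplicative (ZMod 2 × ZMod 2) :=
  Multiplicative.ofAdd (if φ a1 = b1 ∨ φ a1 = b2 then 1 else 0, if φ v1 = v2 then 1 else 0)

lemma F8_map_mul (φ ψ : Gamma8 ≃g Gamma8) : F8 (φ * ψ) = F8 φ * F8 ψ := by
  have hc : ⇑(φ * ψ) = ⇑φ ∘ ⇑ψ := rfl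
  rcases classify8 φ with hφ | hφ | hφ | hφ <;> rcases classify8 ψ with hψ | hψ | hψ | hψ <;>
    · show Multiplicative.ofAdd _ = Multiplicative.ofAdd _ * Multiplicative.ofAdd _
      rw [show ⇑(φ * ψ) a1 = φ (ψ a1) from rfl, show ⇑(φ * ψ) v1 = φ (ψ v1) from rfl,
        hφ, hψ]
      decide

lemma F8_injective : Function.Injective F8 := by
  intro φ ψ h
  rcases classify8 φ with hφ | hφ | hφ | hφ <;> rcases classify8 ψ with hψ | hψ | hψ | hψ <;>
    first
      | exact DFunLike.coe_injective (hφ.trans hψ.symm)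
      | · exfalso
          unfold F8 at h
          rw [hφ, hψ] at h
          revert h; decide

lemma F8_surjective : Function.Surjective F8 := by
  intro k
  have hk : k = F8 1 ∨ k = F8 sigmaIso8 ∨ k = F8 tauIso8 ∨ k = F8 (sigmaIso8 * tauIso8) := by
    revert k; decide
  rcases hk with h | h | h | h
  exacts [⟨1, h.symm⟩, ⟨sigmaIso8, h.symm⟩, ⟨tauIso8, h.symm⟩, ⟨sigmaIso8 * tauIso8, h.symm⟩]

/-- The graph `Γ₈` has exactly four graph automorphisms; its automorphism group is
isomorphic to the Klein four-group `ℤ/2 × ℤ/2`, generated by the involutions `σ` and `τ`. -/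
theorem Gamma8_automorphism_group :
    Nat.card (Gamma8 ≃g Gamma8) = 4 ∧
    (∃ σ' : Gamma8 ≃g Gamma8, ⇑σ' = sigma8) ∧
    (∃ τ' : Gamma8 ≃g Gamma8, ⇑τ' = tau8) ∧
    (∀ φ : Gamma8 ≃g Gamma8,
      ⇑φ = id ∨ ⇑φ = sigma8 ∨ ⇑φ = tau8 ∨ ⇑φ = sigma8 ∘ tau8) ∧
    Nonempty ((Gamma8 ≃g Gamma8) ≃* Multiplicative (ZMod 2 × ZMod 2)) := by
  have hbij : Function.Bijective F8 := ⟨F8_injective, F8_surjective⟩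
  refine ⟨?_, ⟨sigmaIso8, rfl⟩, ⟨tauIso8, rfl⟩, classify8, ⟨MulEquiv.mk' (Equiv.ofBijective F8 hbij) F8_map_mul⟩⟩
  rw [Nat.card_eq_of_bijective F8 hbij]
  simp [Nat.card_eq_fintype_card]
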